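/- Fix M ≥ 2, a function F : (0,∞) → ℝ and σ > 0. Let λ := e^{2πi/M} and define Ω := F(σ) + Σ_{j=1}^{M−1} F(σ·|1 − λ^j|)·(1 − cos(2πj/M)), a real number. Then the curves z_0(t) := 0 and z_r(t) := σ·λ^r·e^{iΩt} for r = 1, …, M solve the asymptotic vortex equations for N = M + 1 vortices: ż_r(t) = i·Σ_{s≠r} F(|z_r(t) − z_s(t)|)·(z_r(t) − z_s(t)) for all t and all r ∈ {0, 1, …, M}. In other words, M vortices at the vertices of a regular M-gon of circumradius σ rotate rigidly with angular frequency Ω about an (M+1)-th vortex which remains fixed at the polygon's centre. -/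

import Mathlib

open Finset

/-- `M` vortices at the vertices of a regular `M`-gon of circumradius `σ`
rotating with frequency `Ω = F(σ) + Σ_{j=1}^{M−1} F(σ|1−λ^j|)(1 − cos(2πj/M))`
about an `(M+1)`-th vortex fixed at the centre solve the asymptotic vortex
equations for `N = M + 1` vortices. -/
theorem rotating_filled_polygon_solves (M : ℕ) (hM : 2 ≤ M) (F : ℝ → ℝ)
    (σ : ℝ) (hσ : 0 < σ)
    (lam : ℂ) (hlam : lam = Complex.exp (2 * Real.pi * Complex.I / M))
    (Ω : ℝ)
    (hΩ : Ω = F σ + ∑ j ∈ Finset.Ico 1 M,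
      F (σ * ‖1 - lam ^ j‖) * (1 - Real.cos (2 * Real.pi * j / M)))
    (z : Fin (M + 1) → ℝ → ℂ)
    (hz0 : ∀ t : ℝ, z 0 t = 0)
    (hz : ∀ r : Fin (M + 1), r ≠ 0 → ∀ t : ℝ,
      z r t = σ * lam ^ (r : ℕ) * Complex.exp (Complex.I * Ω * t)) :
    ∀ (t : ℝ) (r : Fin (M + 1)),
      HasDerivAt (z r)
        (Complex.I * ∑ s ∈ univ.erase r,
          (F (‖z r t - z s t‖) : ℂ) * (z r t - z s t)) t := by
  intro t r
  have hMpos : 0 < M := by omega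
  have hprim : IsPrimitiveRoot lam M := by
    rw [hlam]; exact Complex.isPrimitiveRoot_exp M (by omega)
  have hlamM : lam ^ M = 1 := hprim.pow_eq_one
  have hgeom : ∑ j ∈ range M, lam ^ j = 0 := hprim.geom_sum_eq_zero (by omega)
  have hlampow : ∀ j : ℕ, lam ^ j
      = Complex.exp (((2 * Real.pi * j / M : ℝ) : ℂ) * Complex.I) := by
    intro j
    rw [hlam, ← Complex.exp_nat_mul]
    congr 1
    push_cast
    ring
  have habspow : ∀ j : ℕ, ‖lam ^ j‖ = 1 := fun j => by
    rw [hlampow]; exact Complex.norm_exp_ofReal_mul_I _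
  have hE : ‖Complex.exp (Complex.I * Ω * t)‖ = 1 := by
    rw [show Complex.I * (Ω : ℂ) * (t : ℂ) = ((Ω * t : ℝ) : ℂ) * Complex.I by
      push_cast; ring]
    exact Complex.norm_exp_ofReal_mul_I _
  -- sum of the powers over Ico 1 (M+1) is zero
  have hzero : ∑ j ∈ Ico 1 (M + 1), lam ^ j = 0 := by
    rw [Finset.sum_Ico_eq_sum_range]
    simp only [Nat.add_sub_cancel]
    calc ∑ j ∈ range M, lam ^ (1 + j) = lam * ∑ j ∈ range M, lam ^ j := by
          rw [Finset.mul_sum]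
          exact Finset.sum_congr rfl fun j _ => by rw [pow_add, pow_one]
      _ = 0 := by rw [hgeom, mul_zero]
  -- reindexing a sum over nonzero elements of Fin (M+1)
  have hreindex : ∀ g : ℕ → ℂ,
      ∑ s ∈ (univ : Finset (Fin (M + 1))).erase 0, g (s : ℕ)
        = ∑ j ∈ Ico 1 (M + 1), g j := by
    intro g
    have h1 : ∑ s : Fin (M + 1), g (s : ℕ) = ∑ j ∈ range (M + 1), g j :=
      Fin.sum_univ_eq_sum_range (fun j => g j) (M + 1)
    have h3 : 0 ∈ range (M + 1) := mem_range.2 (by omega)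
    have h5 : (range (M + 1)).erase 0 = Ico 1 (M + 1) := by
      ext x; simp only [mem_erase, mem_range, mem_Ico]; omega
    rw [Finset.sum_erase_eq_sub (mem_univ (0 : Fin (M + 1))), ← h5,
      Finset.sum_erase_eq_sub h3, h1, Fin.val_zero]
  -- each lam^j in terms of cos/sin
  have hcs : ∀ j : ℕ, (1 : ℂ) - lam ^ j
      = ((1 - Real.cos (2 * Real.pi * j / M) : ℝ) : ℂ)
        - ((Real.sin (2 * Real.pi * j / M) : ℝ) : ℂ) * Complex.I := by
    intro j
    rw [hlampow j, Complex.exp_mul_I, ← Complex.ofReal_cos, ← Complex.ofReal_sin]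
    push_cast
    ring
  -- reflection symmetry of the absolute values
  have habs_symm : ∀ j, 1 ≤ j → j < M →
      ‖1 - lam ^ (M - j)‖ = ‖1 - lam ^ j‖ := by
    intro j h1 h2
    have hmul : lam ^ (M - j) * lam ^ j = 1 := by
      rw [← pow_add, Nat.sub_add_cancel h2.le, hlamM]
    have hinv : lam ^ (M - j) = (lam ^ j)⁻¹ := eq_inv_of_mul_eq_one_left hmul
    rw [hinv, Complex.inv_eq_conj (habspow j),
      show (1 : ℂ) - (starRingEnd ℂ) (lam ^ j) = (starRingEnd ℂ) (1 - lam ^ j) by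
        rw [map_sub, map_one]]
    exact Complex.norm_conj _
  -- the sine-weighted sum vanishes
  have hsin : ∑ j ∈ Ico 1 M,
      F (σ * ‖1 - lam ^ j‖) * Real.sin (2 * Real.pi * j / M) = 0 := by
    have hrefl : ∑ j ∈ Ico 1 M,
        F (σ * ‖1 - lam ^ j‖) * Real.sin (2 * Real.pi * j / M)
        = ∑ j ∈ Ico 1 M,
          -(F (σ * ‖1 - lam ^ j‖) * Real.sin (2 * Real.pi * j / M)) := by
      refine Finset.sum_nbij' (fun j => M - j) (fun j => M - j) ?_ ?_ ?_ ?_ ?_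
      · intro a ha; beta_reduce; simp only [mem_Ico] at ha ⊢; omega
      · intro a ha; beta_reduce; simp only [mem_Ico] at ha ⊢; omega
      · intro a ha; beta_reduce; simp only [mem_Ico] at ha; omega
      · intro a ha; beta_reduce; simp only [mem_Ico] at ha; omega
      · intro a ha
        rw [mem_Ico] at ha
        have hcast : ((M - a : ℕ) : ℝ) = (M : ℝ) - a := by
          push_cast [Nat.cast_sub ha.2.le]; ring
        have habs : ‖1 - lam ^ (M - a)‖ = ‖1 - lam ^ a‖ :=
          habs_symm a ha.1 ha.2
        have hMne : (M : ℝ) ≠ 0 := Nat.cast_ne_zero.2 (by omega)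
        have hsin2 : Real.sin (2 * Real.pi * (M - a : ℕ) / M)
            = -Real.sin (2 * Real.pi * a / M) := by
          rw [hcast, show 2 * Real.pi * ((M : ℝ) - a) / M
              = 2 * Real.pi - 2 * Real.pi * a / M by field_simp]
          simp [Real.sin_sub, Real.sin_two_pi, Real.cos_two_pi]
        rw [habs, hsin2]
        ring
    have h2 : (2 : ℝ) * ∑ j ∈ Ico 1 M,
        F (σ * ‖1 - lam ^ j‖) * Real.sin (2 * Real.pi * j / M) = 0 := by
      rw [Finset.sum_neg_distrib] at hrefl
      linarith
    linarith
  -- the key complex identity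
  have hkey : ∑ j ∈ Ico 1 M,
      (F (σ * ‖1 - lam ^ j‖) : ℂ) * (1 - lam ^ j)
      = ((Ω - F σ : ℝ) : ℂ) := by
    have hterm : ∀ j ∈ Ico 1 M,
        (F (σ * ‖1 - lam ^ j‖) : ℂ) * (1 - lam ^ j)
        = ((F (σ * ‖1 - lam ^ j‖)
            * (1 - Real.cos (2 * Real.pi * j / M)) : ℝ) : ℂ)
          - ((F (σ * ‖1 - lam ^ j‖)
            * Real.sin (2 * Real.pi * j / M) : ℝ) : ℂ) * Complex.I := by
      intro j _
      rw [hcs j]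
      push_cast
      ring
    rw [Finset.sum_congr rfl hterm, Finset.sum_sub_distrib, ← Finset.sum_mul,
      ← Complex.ofReal_sum, ← Complex.ofReal_sum, hsin]
    rw [hΩ]
    push_cast
    ring
  by_cases hr : r = 0
  · -- the central vortex is fixed
    subst hr
    have hS : (Complex.I * ∑ s ∈ univ.erase (0 : Fin (M + 1)),
        (F (‖z 0 t - z s t‖) : ℂ) * (z 0 t - z s t)) = 0 := by
      have hterm : ∀ s ∈ (univ : Finset (Fin (M + 1))).erase 0,
          (F (‖z 0 t - z s t‖) : ℂ) * (z 0 t - z s t)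
          = (fun n : ℕ => (-(F σ * σ) : ℂ)
              * Complex.exp (Complex.I * Ω * t) * lam ^ n) (s : ℕ) := by
        intro s hs
        have hs0 : s ≠ 0 := (mem_erase.1 hs).1
        rw [hz0 t, hz s hs0 t]
        have habs : ‖0 - (σ : ℂ) * lam ^ (s : ℕ) * Complex.exp (Complex.I * Ω * t)‖ = σ := by
          rw [zero_sub, norm_neg, norm_mul, norm_mul, habspow, hE,
            Complex.norm_real, Real.norm_eq_abs, abs_of_pos hσ]
          ring
        rw [habs]
        push_cast
        ring
      rw [Finset.sum_congr rfl hterm, hreindex (fun n : ℕ => (-(F σ * σ) : ℂ)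
        * Complex.exp (Complex.I * Ω * t) * lam ^ n)]
      rw [show ∑ j ∈ Ico 1 (M + 1), (-(F σ * σ) : ℂ)
          * Complex.exp (Complex.I * Ω * t) * lam ^ j
          = (-(F σ * σ) : ℂ) * Complex.exp (Complex.I * Ω * t)
            * ∑ j ∈ Ico 1 (M + 1), lam ^ j from (Finset.mul_sum _ _ _).symm]
      rw [hzero]
      ring
    rw [hS]
    have hzf : z 0 = fun _ : ℝ => (0 : ℂ) := funext hz0
    rw [hzf]
    exact hasDerivAt_const t 0
  · -- the rotating vortices
    set R : ℕ := (r : ℕ) with hRdef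
    have hR1 : 1 ≤ R := by
      rcases Nat.eq_zero_or_pos R with h | h
      · exact absurd (Fin.ext (h.trans rfl.symm) : r = 0) hr
      · exact h
    have hRM : R ≤ M := by have := r.isLt; omega
    -- derivative of the trajectory
    have hEd : HasDerivAt (fun t : ℝ => Complex.exp (Complex.I * Ω * t))
        (Complex.I * Ω * Complex.exp (Complex.I * Ω * t)) t := by
      have h1 : HasDerivAt (fun w : ℂ => Complex.exp (Complex.I * Ω * w))
          (Complex.I * Ω * Complex.exp (Complex.I * Ω * (t : ℂ))) (t : ℂ) := by
        simpa [mul_comm] using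
          ((hasDerivAt_id (t : ℂ)).const_mul (Complex.I * (Ω : ℂ))).cexp
      exact h1.comp_ofReal
    have hd : HasDerivAt (z r)
        ((σ : ℂ) * lam ^ R * (Complex.I * Ω * Complex.exp (Complex.I * Ω * t))) t := by
      have hzf : z r = fun t : ℝ =>
          (σ : ℂ) * lam ^ R * Complex.exp (Complex.I * Ω * t) := funext (hz r hr)
      rw [hzf]
      exact hEd.const_mul _
    -- power arithmetic
    have hpowmod : ∀ n : ℕ, lam ^ (n % M) = lam ^ n := by
      intro n
      conv_rhs => rw [← Nat.mod_add_div n M]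
      rw [pow_add, pow_mul, hlamM, one_pow, mul_one]
    have hjval : ∀ S : ℕ, 1 ≤ S → S ≤ M → S ≠ R →
        (M + S - R) % M = if S < R then M + S - R else S - R := by
      intro S h1 h2 h3
      rcases lt_or_ge S R with h | h
      · rw [if_pos h]; exact Nat.mod_eq_of_lt (by omega)
      · rw [if_neg (by omega), show M + S - R = M + (S - R) by omega,
          Nat.add_mod_left]
        exact Nat.mod_eq_of_lt (by omega)
    have hfac : ∀ S : ℕ, lam ^ S = lam ^ R * lam ^ ((M + S - R) % M) := by
      intro S
      rw [hpowmod, ← pow_add, show R + (M + S - R) = M + S by omega,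
        pow_add, hlamM, one_mul]
    -- split off the central vortex and reindex
    have h0mem : (0 : Fin (M + 1)) ∈ (univ : Finset (Fin (M + 1))).erase r :=
      mem_erase.2 ⟨Ne.symm hr, mem_univ _⟩
    have hsplit := Finset.add_sum_erase _
      (fun s : Fin (M + 1) => (F (‖z r t - z s t‖) : ℂ) * (z r t - z s t))
      h0mem
    -- the term at the centre
    have hzr : z r t = (σ : ℂ) * lam ^ R * Complex.exp (Complex.I * Ω * t) :=
      hz r hr t
    have habsR : ‖(σ : ℂ) * lam ^ R * Complex.exp (Complex.I * Ω * t)‖ = σ := by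
      rw [norm_mul, norm_mul, habspow, hE, Complex.norm_real, Real.norm_eq_abs, abs_of_pos hσ]
      ring
    have hcen : (F (‖z r t - z 0 t‖) : ℂ) * (z r t - z 0 t)
        = (F σ : ℂ) * ((σ : ℂ) * lam ^ R * Complex.exp (Complex.I * Ω * t)) := by
      rw [hz0 t, hzr, sub_zero, habsR]
    -- the remaining sum
    have hrest : ∑ s ∈ ((univ : Finset (Fin (M + 1))).erase r).erase 0,
        (F (‖z r t - z s t‖) : ℂ) * (z r t - z s t)
        = ∑ j ∈ Ico 1 M, (F (σ * ‖1 - lam ^ j‖) : ℂ)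
            * ((σ : ℂ) * lam ^ R * Complex.exp (Complex.I * Ω * t) * (1 - lam ^ j)) := by
      refine Finset.sum_nbij' (fun s : Fin (M + 1) => (M + (s : ℕ) - R) % M)
        (fun j : ℕ => if h : R + j ≤ M then (⟨R + j, by omega⟩ : Fin (M + 1))
          else (⟨min (R + j - M) M, by omega⟩ : Fin (M + 1))) ?_ ?_ ?_ ?_ ?_
      · intro s hs
        beta_reduce
        rw [mem_erase, mem_erase] at hs
        have hS1 : 1 ≤ (s : ℕ) := by
          rcases Nat.eq_zero_or_pos (s : ℕ) with h | h
          · exact absurd (Fin.ext (h.trans rfl.symm) : s = 0) hs.1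
          · exact h
        have hSM : (s : ℕ) ≤ M := by have := s.isLt; omega
        have hSR : (s : ℕ) ≠ R := fun h => hs.2.1 (Fin.ext h)
        rw [mem_Ico, hjval _ hS1 hSM hSR]
        split_ifs <;> omega
      · intro j hj
        beta_reduce
        rw [mem_Ico] at hj
        rw [mem_erase, mem_erase]
        refine ⟨fun hc => ?_, fun hc => ?_, mem_univ _⟩
        · have h0 := congrArg Fin.val hc
          rw [apply_dite Fin.val, Fin.val_zero] at h0
          split_ifs at h0 <;> simp only [Fin.val_mk] at h0 <;> omega
        · have h0 := congrArg Fin.val hc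
          rw [apply_dite Fin.val] at h0
          split_ifs at h0 <;> simp only [Fin.val_mk] at h0 <;> omega
      · intro s hs
        beta_reduce
        rw [mem_erase, mem_erase] at hs
        have hS1 : 1 ≤ (s : ℕ) := by
          rcases Nat.eq_zero_or_pos (s : ℕ) with h | h
          · exact absurd (Fin.ext (h.trans rfl.symm) : s = 0) hs.1
          · exact h
        have hSM : (s : ℕ) ≤ M := by have := s.isLt; omega
        have hSR : (s : ℕ) ≠ R := fun h => hs.2.1 (Fin.ext h)
        apply Fin.ext
        rcases lt_or_ge (s : ℕ) R with h | h
        · have hj0 : (M + (s : ℕ) - R) % M = M + (s : ℕ) - R := by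
            rw [hjval _ hS1 hSM hSR, if_pos h]
          rw [dif_neg (show ¬(R + (M + (s : ℕ) - R) % M ≤ M) by rw [hj0]; omega)]
          show min (R + (M + (s : ℕ) - R) % M - M) M = (s : ℕ)
          rw [hj0]
          omega
        · have hj0 : (M + (s : ℕ) - R) % M = (s : ℕ) - R := by
            rw [hjval _ hS1 hSM hSR, if_neg (by omega)]
          rw [dif_pos (show R + (M + (s : ℕ) - R) % M ≤ M by rw [hj0]; omega)]
          show R + (M + (s : ℕ) - R) % M = (s : ℕ)
          rw [hj0]
          omega
      · intro j hj
        beta_reduce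
        rw [mem_Ico] at hj
        by_cases h : R + j ≤ M
        · rw [dif_pos h]
          show (M + (R + j) - R) % M = j
          rw [hjval (R + j) (by omega) (by omega) (by omega)]
          split_ifs <;> omega
        · rw [dif_neg h]
          show (M + min (R + j - M) M - R) % M = j
          rw [show min (R + j - M) M = R + j - M by omega,
            hjval (R + j - M) (by omega) (by omega) (by omega)]
          split_ifs <;> omega
      · intro s hs
        beta_reduce
        rw [mem_erase, mem_erase] at hs
        have hS1 : 1 ≤ (s : ℕ) := by
          rcases Nat.eq_zero_or_pos (s : ℕ) with h | h
          · exact absurd (Fin.ext (h.trans rfl.symm) : s = 0) hs.1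
          · exact h
        have hSM : (s : ℕ) ≤ M := by have := s.isLt; omega
        have hSR : (s : ℕ) ≠ R := fun h => hs.2.1 (Fin.ext h)
        have hdiff : z r t - z s t
            = (σ : ℂ) * lam ^ R * Complex.exp (Complex.I * Ω * t)
              * (1 - lam ^ ((M + (s : ℕ) - R) % M)) := by
          rw [hzr, hz s hs.1 t, hfac (s : ℕ)]
          ring
        have habs : ‖z r t - z s t‖
            = σ * ‖1 - lam ^ ((M + (s : ℕ) - R) % M)‖ := by
          rw [hdiff, norm_mul, norm_mul, norm_mul, habspow, hE,
            Complex.norm_real, Real.norm_eq_abs, abs_of_pos hσ]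
          ring
        rw [habs, hdiff]
    -- assemble everything
    have hRHS : Complex.I * ∑ s ∈ univ.erase r,
        (F (‖z r t - z s t‖) : ℂ) * (z r t - z s t)
        = (σ : ℂ) * lam ^ R * (Complex.I * Ω * Complex.exp (Complex.I * Ω * t)) := by
      rw [← hsplit]
      beta_reduce
      rw [hcen, hrest]
      rw [show ∑ j ∈ Ico 1 M, (F (σ * ‖1 - lam ^ j‖) : ℂ)
          * ((σ : ℂ) * lam ^ R * Complex.exp (Complex.I * Ω * t) * (1 - lam ^ j))
          = (σ : ℂ) * lam ^ R * Complex.exp (Complex.I * Ω * t)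
            * ∑ j ∈ Ico 1 M, (F (σ * ‖1 - lam ^ j‖) : ℂ) * (1 - lam ^ j) by
        rw [Finset.mul_sum]; exact Finset.sum_congr rfl fun j _ => by ring]
      rw [hkey]
      push_cast
      ring
    rw [hRHS]
    exact hd
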